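/- The commutator subgroup VB_3' of the virtual braid group VB_3 is not finitely generated: no finite subset of VB_3' generates VB_3' as a group. -/

import Mathlib

/-!
Common setup: the virtual braid group `VB n` and the welded braid group `WB n`
as presented groups, together with the distinguished elements of their
commutator subgroups used in the paper
"Commutator subgroups of virtual and welded braid groups".

Generators: for `i : Fin (n-1)`, `Sum.inl i` represents σ_{i+1} and
`Sum.inr i` represents ρ_{i+1}.
-/

/-- The generating set of `VB n` (and `WB n`). -/
abbrev VBGen (n : ℕ) := (Fin (n - 1)) ⊕ (Fin (n - 1))

/-- The free group letter σ_i, for `1 ≤ i ≤ n-1` (junk value `1` otherwise). -/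
def fσ (n i : ℕ) : FreeGroup (VBGen n) :=
  if h : 1 ≤ i ∧ i - 1 < n - 1 then FreeGroup.of (Sum.inl ⟨i - 1, h.2⟩) else 1

/-- The free group letter ρ_i, for `1 ≤ i ≤ n-1` (junk value `1` otherwise). -/
def fρ (n i : ℕ) : FreeGroup (VBGen n) :=
  if h : 1 ≤ i ∧ i - 1 < n - 1 then FreeGroup.of (Sum.inr ⟨i - 1, h.2⟩) else 1

/-- The defining relators of the virtual braid group `VB n`. -/
def vbRels (n : ℕ) : Set (FreeGroup (VBGen n)) :=
  {r | ∃ i j, 1 ≤ i ∧ i + 2 ≤ j ∧ j ≤ n - 1 ∧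
      (r = fσ n i * fσ n j * (fσ n i)⁻¹ * (fσ n j)⁻¹ ∨
       r = fρ n i * fρ n j * (fρ n i)⁻¹ * (fρ n j)⁻¹ ∨
       r = fσ n i * fρ n j * (fσ n i)⁻¹ * (fρ n j)⁻¹ ∨
       r = fσ n j * fρ n i * (fσ n j)⁻¹ * (fρ n i)⁻¹)} ∪
  {r | ∃ i, 1 ≤ i ∧ i + 1 ≤ n - 1 ∧
      (r = fσ n i * fσ n (i+1) * fσ n i * (fσ n (i+1))⁻¹ * (fσ n i)⁻¹ * (fσ n (i+1))⁻¹ ∨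
       r = fρ n i * fρ n (i+1) * fρ n i * (fρ n (i+1))⁻¹ * (fρ n i)⁻¹ * (fρ n (i+1))⁻¹ ∨
       r = fρ n i * fρ n (i+1) * fσ n i * (fρ n (i+1))⁻¹ * (fρ n i)⁻¹ * (fσ n (i+1))⁻¹)} ∪
  {r | ∃ i, 1 ≤ i ∧ i ≤ n - 1 ∧ r = fρ n i * fρ n i}

/-- The virtual braid group on `n` strands. -/
abbrev VB (n : ℕ) := PresentedGroup (vbRels n)

/-- The generator σ_i of `VB n`. -/
def vσ (n i : ℕ) : VB n := PresentedGroup.mk (vbRels n) (fσ n i)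

/-- The generator ρ_i of `VB n`. -/
def vρ (n i : ℕ) : VB n := PresentedGroup.mk (vbRels n) (fρ n i)

/-- a_m = σ_1^m (ρ_1 σ_1 ρ_1 σ_1⁻¹) σ_1^{-m}. -/
def va (n : ℕ) (m : ℤ) : VB n :=
  (vσ n 1) ^ m * (vρ n 1 * vσ n 1 * vρ n 1 * (vσ n 1)⁻¹) * (vσ n 1) ^ (-m)

/-- b_{m,ε} = σ_1^m (ρ_1^ε σ_2 ρ_1^ε σ_1⁻¹) σ_1^{-m}. -/
def vb (n : ℕ) (m : ℤ) (ε : ℕ) : VB n :=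
  (vσ n 1) ^ m * ((vρ n 1) ^ ε * vσ n 2 * (vρ n 1) ^ ε * (vσ n 1)⁻¹) * (vσ n 1) ^ (-m)

/-- c_l = σ_l σ_1⁻¹. -/
def vc (n l : ℕ) : VB n := vσ n l * (vσ n 1)⁻¹

/-- f_{m,ε} = σ_1^m (ρ_1^ε ρ_2 ρ_1^{ε+1}) σ_1^{-m}; `f_m` is `vf n m 0`. -/
def vf (n : ℕ) (m : ℤ) (ε : ℕ) : VB n :=
  (vσ n 1) ^ m * ((vρ n 1) ^ ε * vρ n 2 * (vρ n 1) ^ (ε + 1)) * (vσ n 1) ^ (-m)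

/-- g_{m,l} = σ_1^m (ρ_l ρ_1) σ_1^{-m}. -/
def vg (n : ℕ) (m : ℤ) (l : ℕ) : VB n :=
  (vσ n 1) ^ m * (vρ n l * vρ n 1) * (vσ n 1) ^ (-m)

/-- The additional relators ρ_i σ_{i+1} σ_i (ρ_{i+1})⁻¹ σ_i⁻¹ σ_{i+1}⁻¹ of the
welded braid group. -/
def wbExtraRels (n : ℕ) : Set (FreeGroup (VBGen n)) :=
  {r | ∃ i, 1 ≤ i ∧ i + 1 ≤ n - 1 ∧
      r = fρ n i * fσ n (i+1) * fσ n i * (fρ n (i+1))⁻¹ * (fσ n i)⁻¹ * (fσ n (i+1))⁻¹}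

/-- The defining relators of the welded braid group `WB n`. -/
def wbRels (n : ℕ) : Set (FreeGroup (VBGen n)) := vbRels n ∪ wbExtraRels n

/-- The welded braid group on `n` strands. -/
abbrev WB (n : ℕ) := PresentedGroup (wbRels n)

/-- The generator σ_i of `WB n`. -/
def wσ (n i : ℕ) : WB n := PresentedGroup.mk (wbRels n) (fσ n i)

/-- The generator ρ_i of `WB n`. -/
def wρ (n i : ℕ) : WB n := PresentedGroup.mk (wbRels n) (fρ n i)

/-- a_m in `WB n`. -/
def wa (n : ℕ) (m : ℤ) : WB n :=
  (wσ n 1) ^ m * (wρ n 1 * wσ n 1 * wρ n 1 * (wσ n 1)⁻¹) * (wσ n 1) ^ (-m)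

/-- f_{m,ε} in `WB n`; `f_m` is `wf n m 0`. -/
def wf (n : ℕ) (m : ℤ) (ε : ℕ) : WB n :=
  (wσ n 1) ^ m * ((wρ n 1) ^ ε * wρ n 2 * (wρ n 1) ^ (ε + 1)) * (wσ n 1) ^ (-m)

/-- c_l in `WB n`. -/
def wc (n l : ℕ) : WB n := wσ n l * (wσ n 1)⁻¹

/-- g_{m,l} in `WB n`. -/
def wg (n : ℕ) (m : ℤ) (l : ℕ) : WB n :=
  (wσ n 1) ^ m * (wρ n l * wρ n 1) * (wσ n 1) ^ (-m)

open scoped commutatorElement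

namespace VB3Aux

abbrev LA := ℤ →₀ ZMod 2

lemma toMult_apply (e : LA ≃+ LA) (x : Multiplicative LA) :
    (AddEquiv.toMultiplicative e) x = Multiplicative.ofAdd (e x.toAdd) := rfl

/-- shift action of ℤ on LA -/
noncomputable def shiftHom : Multiplicative ℤ →* MulAut (Multiplicative LA) where
  toFun k := AddEquiv.toMultiplicative (Finsupp.domCongr (Equiv.addRight k.toAdd))
  map_one' := by
    ext x
    refine Multiplicative.toAdd.injective ?_
    ext a
    simp [toMult_apply, Finsupp.domCongr_apply, Finsupp.equivMapDomain_apply, Equiv.Perm.one_symm, Equiv.Perm.one_apply]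
  map_mul' a b := by
    ext x : 1
    refine Multiplicative.toAdd.injective ?_
    ext c
    have : (Equiv.addRight (Multiplicative.toAdd b) * Equiv.addRight (Multiplicative.toAdd a)).symm c
        = (Equiv.addRight (Multiplicative.toAdd a)).symm ((Equiv.addRight (Multiplicative.toAdd b)).symm c) := rfl
    simp only [MulAut.mul_apply, toMult_apply, toAdd_ofAdd, Finsupp.domCongr_apply,
      Finsupp.equivMapDomain_apply, this, Equiv.addRight_symm_apply]
    congr 1
    rw [toAdd_mul]
    ring

abbrev LL := Multiplicative LA ⋊[shiftHom] Multiplicative ℤ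

noncomputable def lt : LL := SemidirectProduct.inr (Multiplicative.ofAdd 1)
noncomputable def lr : LL := SemidirectProduct.inl (Multiplicative.ofAdd (Finsupp.single 0 1))

lemma lr_sq : lr * lr = 1 := by
  rw [lr, ← map_mul, ← ofAdd_add, ← Finsupp.single_add]
  have : (1 + 1 : ZMod 2) = 0 := by decide
  rw [this, Finsupp.single_zero, ofAdd_zero, map_one]



noncomputable def fgen : VBGen 3 → LL := Sum.elim (fun _ => lt) (fun _ => lr)

lemma lr_inv : lr⁻¹ = lr := inv_eq_of_mul_eq_one_right lr_sq

lemma lr_sq' (x : LL) : lr * (lr * x) = x := by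
  rw [← mul_assoc, lr_sq, one_mul]

lemma lift_fσ {i : ℕ} (h1 : 1 ≤ i) (h2 : i ≤ 2) : FreeGroup.lift fgen (fσ 3 i) = lt := by
  rw [fσ, dif_pos ⟨h1, by omega⟩, FreeGroup.lift_apply_of]; rfl

lemma lift_fρ {i : ℕ} (h1 : 1 ≤ i) (h2 : i ≤ 2) : FreeGroup.lift fgen (fρ 3 i) = lr := by
  rw [fρ, dif_pos ⟨h1, by omega⟩, FreeGroup.lift_apply_of]; rfl

lemma rels_check : ∀ r ∈ vbRels 3, FreeGroup.lift fgen r = 1 := by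
  rintro r ((⟨i, j, hi, hij, hj, _⟩ | ⟨i, hi, hi2, hc⟩) | ⟨i, hi, hi2, hr⟩)
  · omega
  · have hi1 : i = 1 := by omega
    subst hi1
    have e1 : FreeGroup.lift fgen (fσ 3 1) = lt := lift_fσ le_rfl one_le_two
    have e2 : FreeGroup.lift fgen (fσ 3 2) = lt := lift_fσ one_le_two le_rfl
    have e3 : FreeGroup.lift fgen (fρ 3 1) = lr := lift_fρ le_rfl one_le_two
    have e4 : FreeGroup.lift fgen (fρ 3 2) = lr := lift_fρ one_le_two le_rfl
    rcases hc with hc | hc | hc <;> subst hc <;>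
      simp only [map_mul, map_inv, e1, e2, e3, e4]
    · group
    · simp [mul_assoc, lr_inv, lr_sq', lr_sq]
    · simp [mul_assoc, lr_inv, lr_sq', lr_sq]
  · subst hr
    rw [map_mul, lift_fρ hi hi2, lr_sq]

noncomputable def hmap : VB 3 →* LL := PresentedGroup.toGroup rels_check

lemma hmap_mk (w : FreeGroup (VBGen 3)) :
    hmap (PresentedGroup.mk (vbRels 3) w) = FreeGroup.lift fgen w := rfl

lemma hmap_vσ : hmap (vσ 3 1) = lt := by
  rw [vσ, hmap_mk, lift_fσ le_rfl one_le_two]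

lemma hmap_vρ : hmap (vρ 3 1) = lr := by
  rw [vρ, hmap_mk, lift_fρ le_rfl one_le_two]

lemma lt_zpow (k : ℤ) : lt ^ k = SemidirectProduct.inr (Multiplicative.ofAdd k) := by
  rw [lt, ← map_zpow]
  congr 1
  rw [← ofAdd_zsmul, smul_eq_mul, mul_one]

lemma shift_single (k : ℤ) :
    shiftHom (Multiplicative.ofAdd k) (Multiplicative.ofAdd (Finsupp.single 0 1)) =
      Multiplicative.ofAdd (Finsupp.single k (1 : ZMod 2)) := by
  show Multiplicative.ofAdd ((Finsupp.domCongr (α := ℤ) (M := ZMod 2)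
      (Equiv.addRight k)) (Finsupp.single 0 1)) = _
  rw [Finsupp.domCongr_apply, Finsupp.equivMapDomain_single]
  simp

lemma comm_eq (k : ℤ) : ⁅lt ^ k, lr⁆ =
    SemidirectProduct.inl (Multiplicative.ofAdd
      (Finsupp.single k (1 : ZMod 2) - Finsupp.single 0 1)) := by
  rw [commutatorElement_def, lt_zpow, lr]
  have h1 := SemidirectProduct.inl_aut (φ := shiftHom) (Multiplicative.ofAdd k)
      (Multiplicative.ofAdd (Finsupp.single 0 1))
  rw [map_inv] at h1
  calc SemidirectProduct.inr (Multiplicative.ofAdd k) *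
        SemidirectProduct.inl (Multiplicative.ofAdd (Finsupp.single 0 (1 : ZMod 2))) *
        (SemidirectProduct.inr (Multiplicative.ofAdd k))⁻¹ *
        (SemidirectProduct.inl (Multiplicative.ofAdd (Finsupp.single 0 (1 : ZMod 2))))⁻¹
      = SemidirectProduct.inl (shiftHom (Multiplicative.ofAdd k)
          (Multiplicative.ofAdd (Finsupp.single 0 1))) *
        (SemidirectProduct.inl (Multiplicative.ofAdd (Finsupp.single 0 (1 : ZMod 2))))⁻¹ := by
        rw [← h1]
    _ = _ := by
        rw [← map_inv, ← map_mul]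
        congr 1
        rw [shift_single, ← ofAdd_neg, ← ofAdd_add, sub_eq_add_neg]

lemma comm_mem (k : ℤ) : ⁅(vσ 3 1) ^ k, vρ 3 1⁆ ∈ commutator (VB 3) :=
  Subgroup.commutator_mem_commutator (Subgroup.mem_top _) (Subgroup.mem_top _)

end VB3Aux

/-- `VB_3'` is not finitely generated: no finite subset of `VB_3'`
generates it as a group. -/
theorem VB3_commutator_not_finitely_generated :
    ¬ ∃ S : Finset (VB 3), (S : Set (VB 3)) ⊆ (commutator (VB 3) : Subgroup (VB 3)) ∧
        Subgroup.closure (S : Set (VB 3)) = commutator (VB 3) := by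
  rintro ⟨S, hS, hcl⟩
  classical
  set h := VB3Aux.hmap with hh
  set T : Subgroup VB3Aux.LL := Subgroup.closure (h '' S) with hT
  have hTmap : Subgroup.map h (commutator (VB 3)) = T := by
    rw [← hcl, MonoidHom.map_closure]
  have hker : T ≤ (SemidirectProduct.inl :
      Multiplicative VB3Aux.LA →* VB3Aux.LL).range := by
    rw [SemidirectProduct.range_inl_eq_ker_rightHom, ← hTmap, commutator_def,
      Subgroup.map_commutator]
    refine Subgroup.commutator_le.2 fun a _ b _ => ?_
    rw [MonoidHom.mem_ker, map_commutatorElement]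
    exact commutatorElement_eq_one_iff_mul_comm.2 (mul_comm _ _)
  set S₀ : Set (Multiplicative VB3Aux.LA) := ⇑SemidirectProduct.inl ⁻¹' (h '' S) with hS₀
  have hS₀fin : S₀.Finite :=
    Set.Finite.preimage (SemidirectProduct.inl_injective.injOn) ((S.finite_toSet).image h)
  have himg : ⇑SemidirectProduct.inl '' S₀ = h '' S := by
    apply Set.image_preimage_eq_of_subset
    intro x hx
    exact hker (Subgroup.subset_closure hx)
  have hTeq : T = Subgroup.map SemidirectProduct.inl (Subgroup.closure S₀) := by
    rw [MonoidHom.map_closure, himg, hT]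
  set P : Submodule (ZMod 2) VB3Aux.LA :=
    Submodule.span (ZMod 2) (⇑Multiplicative.toAdd '' S₀) with hP
  set Q : Subgroup (Multiplicative VB3Aux.LA) := AddSubgroup.toSubgroup P.toAddSubgroup with hQ
  have hcQ : (Subgroup.closure S₀ : Set (Multiplicative VB3Aux.LA)) ⊆ Q := by
    refine Subgroup.closure_le Q |>.2 fun x hx => ?_
    show Multiplicative.toAdd x ∈ P
    exact Submodule.subset_span (Set.mem_image_of_mem _ hx)
  haveI : Module.Finite (ZMod 2) P :=
    Module.Finite.span_of_finite _ (hS₀fin.image _)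
  haveI : Finite P := Module.finite_of_finite (ZMod 2)
  have hPfin : (P : Set VB3Aux.LA).Finite := Set.toFinite _
  have hQfin : (Q : Set (Multiplicative VB3Aux.LA)).Finite := by
    have hQset : (Q : Set (Multiplicative VB3Aux.LA)) =
        ⇑Multiplicative.toAdd ⁻¹' (P : Set VB3Aux.LA) := rfl
    rw [hQset]
    exact Set.Finite.preimage (Multiplicative.toAdd.injective.injOn) hPfin
  have hclfin : ((Subgroup.closure S₀ : Subgroup _) : Set (Multiplicative VB3Aux.LA)).Finite :=
    hQfin.subset hcQ
  have hTfin : (T : Set VB3Aux.LL).Finite := by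
    rw [hTeq, Subgroup.coe_map]
    exact hclfin.image _
  have hmem : ∀ k : ℤ, ⁅VB3Aux.lt ^ k, VB3Aux.lr⁆ ∈ T := by
    intro k
    rw [← hTmap]
    refine ⟨⁅(vσ 3 1) ^ k, vρ 3 1⁆, VB3Aux.comm_mem k, ?_⟩
    rw [map_commutatorElement, map_zpow, VB3Aux.hmap_vσ, VB3Aux.hmap_vρ]
  have hinj : Function.Injective (fun k : ℕ => ⁅VB3Aux.lt ^ ((k : ℤ) + 1), VB3Aux.lr⁆) := by
    intro a b hab
    by_contra hne
    simp only [VB3Aux.comm_eq] at hab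
    have h1 := SemidirectProduct.inl_injective hab
    have h2 := Multiplicative.ofAdd.injective h1
    have hmk := DFunLike.congr_fun h2 ((a : ℤ) + 1)
    have h0 : ¬ ((0 : ℤ) = (a : ℤ) + 1) := by omega
    have hba : ¬ (((b : ℤ) + 1) = (a : ℤ) + 1) := by
      intro hba'
      exact hne (by omega)
    simp only [Finsupp.sub_apply, Finsupp.single_apply] at hmk
    simp only [if_pos rfl, if_neg h0, if_neg hba, sub_zero] at hmk
    exact absurd hmk (by decide)
  have hinf : (T : Set VB3Aux.LL).Infinite :=
    Set.infinite_of_injective_forall_mem hinj fun k => hmem _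
  exact hinf hTfin
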